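/- Let L be the restricted wreath product ℤ ≀ ℤ. Then for every n ≥ 1, every word w ∈ FreeGroup (Fin n) that is an E-type iterated identity of L has iterational depth at most 2 in L: L has iterational depth at most 2 with respect to w. -/

import Mathlib

noncomputable section

/-- The verbal map: evaluate `w` with the variable of index `0` set to `x`
and the variable of index `i` set to `f i` for `i ≠ 0`. -/
def verbalMap {n : ℕ} [NeZero n] {G : Type*} [Group G] (w : FreeGroup (Fin n))
    (f : Fin n → G) : G → G :=
  fun x => FreeGroup.lift (Function.update f 0 x) w

/-- `w` is an E-type (Engel type) iterated identity of `G`. -/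
def IsEIteratedIdentity {n : ℕ} [NeZero n] (w : FreeGroup (Fin n)) (G : Type*) [Group G] : Prop :=
  ∀ f : Fin n → G, ∃ d : ℕ, 1 ≤ d ∧ (verbalMap w f)^[d] (f 0) = 1

/-- `G` has iterational depth at most `D` with respect to `w`. -/
def DepthAtMost {n : ℕ} [NeZero n] (w : FreeGroup (Fin n)) (G : Type*) [Group G] (D : ℕ) : Prop :=
  ∀ f : Fin n → G, ∃ d : ℕ, 1 ≤ d ∧ d ≤ D ∧ (verbalMap w f)^[d] (f 0) = 1

/-- The shift automorphism action of `ℤ` on finitely supported configurations,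
`(k • c) i = c (i - k)`, as a homomorphism into the automorphism group. -/
def wreathShift (R : Type*) [AddCommGroup R] :
    Multiplicative ℤ →* MulAut (Multiplicative (ℤ →₀ R)) where
  toFun k := AddEquiv.toMultiplicative
    (Finsupp.domCongr (Equiv.addRight (Multiplicative.toAdd k)) : (ℤ →₀ R) ≃+ (ℤ →₀ R))
  map_one' := by
    refine MulEquiv.ext fun c => Multiplicative.toAdd.injective (Finsupp.ext fun i => ?_)
    simp [Finsupp.equivMapDomain_apply, Equiv.Perm.one_def]
  map_mul' := by
    intro a b
    refine MulEquiv.ext fun c => Multiplicative.toAdd.injective (Finsupp.ext fun i => ?_)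
    simp [Finsupp.equivMapDomain_apply, Equiv.Perm.mul_def, Equiv.symm_trans_apply,
      sub_eq_add_neg, add_comm, add_assoc, add_left_comm]

/-- The restricted wreath product `ℤ ≀ ℤ`. -/
abbrev WreathZZ : Type := Multiplicative (ℤ →₀ ℤ) ⋊[wreathShift ℤ] Multiplicative ℤ

-- ==================== auxiliary material ====================
open SemidirectProduct Multiplicative Finsupp

abbrev RZ : Type := AddMonoidAlgebra ℤ ℤ

/-- Embedding of the base group, written additively over the ring `RZ = ℤ[t,t⁻¹]`. -/
def inlZ (a : RZ) : WreathZZ := inl (Multiplicative.ofAdd a.coeff)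

lemma inlZ_mul (x y : RZ) : inlZ x * inlZ y = inlZ (x + y) :=
  (map_mul inl (ofAdd x.coeff) (ofAdd y.coeff)).symm

lemma inlZ_zero : inlZ 0 = 1 := map_one inl

lemma inlZ_inv (x : RZ) : (inlZ x)⁻¹ = inlZ (-x) := by
  rw [inlZ, inlZ, ← map_inv]; rfl

lemma inlZ_injective : Function.Injective inlZ := fun a b h => by
  have := inl_injective (φ := wreathShift ℤ) h
  exact AddMonoidAlgebra.coeff_injective (ofAdd.injective this)

lemma rightHom_inlZ (a : RZ) : rightHom (inlZ a) = 1 := rightHom_inl _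

lemma wreathShift_eq (k : Multiplicative ℤ) (a : RZ) :
    (wreathShift ℤ k) (ofAdd a.coeff)
      = ofAdd (((AddMonoidAlgebra.single (toAdd k) 1 : RZ) * a : RZ).coeff) := by
  refine Multiplicative.toAdd.injective (Finsupp.ext fun i => ?_)
  have h1 : (toAdd ((wreathShift ℤ k) (ofAdd a.coeff))) i = a.coeff (i + -toAdd k) := by
    simp [wreathShift, Finsupp.equivMapDomain_apply, sub_eq_add_neg]
  have h2 : ((AddMonoidAlgebra.single (toAdd k) 1 : RZ) * a).coeff i = 1 * a.coeff (-(toAdd k) + i) :=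
    AddMonoidAlgebra.coeff_single_mul_apply a 1 (toAdd k) i
  calc (toAdd ((wreathShift ℤ k) (ofAdd a.coeff))) i = a.coeff (i + -toAdd k) := h1
    _ = 1 * a.coeff (-(toAdd k) + i) := by rw [one_mul, add_comm]
    _ = ((AddMonoidAlgebra.single (toAdd k) 1 : RZ) * a).coeff i := h2.symm
    _ = (toAdd (ofAdd (((AddMonoidAlgebra.single (toAdd k) 1 : RZ) * a : RZ).coeff))) i := rfl

lemma conj_inlZ (h : WreathZZ) (a : RZ) :
    h * inlZ a * h⁻¹ = inlZ (AddMonoidAlgebra.single (toAdd (rightHom h)) 1 * a) := by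
  obtain ⟨c, k⟩ := h
  have hh : (⟨c, k⟩ : WreathZZ) = inl c * inr k := (inl_left_mul_inr_right _).symm
  have hrh : rightHom (⟨c, k⟩ : WreathZZ) = k := rfl
  have hcomm : ∀ x y : Multiplicative (ℤ →₀ ℤ), (inl x : WreathZZ) * inl y = inl y * inl x := by
    intro x y; rw [← map_mul, ← map_mul, mul_comm]
  rw [hrh, hh, mul_inv_rev, ← map_inv, ← map_inv, inlZ]
  have e1 : (inl c : WreathZZ) * (inr k : WreathZZ) * (inl (ofAdd a.coeff) : WreathZZ)
      * ((inr (k⁻¹) : WreathZZ) * (inl (c⁻¹) : WreathZZ))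
      = (inl c : WreathZZ)
        * ((inr k : WreathZZ) * (inl (ofAdd a.coeff) : WreathZZ) * (inr (k⁻¹) : WreathZZ))
        * (inl (c⁻¹) : WreathZZ) := by
    group
  rw [e1]
  have e2 := (inl_aut (φ := wreathShift ℤ) k (ofAdd a.coeff)).symm
  rw [e2, wreathShift_eq]
  rw [hcomm, mul_assoc, ← map_mul]
  simp only [mul_inv_cancel, map_one, mul_one]
  rfl

section ExpSum
variable {n : ℕ}

def expHom (i : Fin n) : FreeGroup (Fin n) →* Multiplicative ℤ :=
  FreeGroup.lift (fun j => if j = i then ofAdd 1 else 1)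

lemma lift_toAdd (g : Fin n → Multiplicative ℤ) (w : FreeGroup (Fin n)) :
    toAdd (FreeGroup.lift g w) = ∑ i, toAdd (g i) * toAdd (expHom i w) := by
  have hpure : ∀ x : Fin n, (pure x : FreeGroup (Fin n)) = FreeGroup.of x := fun _ => rfl
  have hof : ∀ (u : Fin n → Multiplicative ℤ) (x : Fin n),
      FreeGroup.lift u (FreeGroup.of x) = u x := fun _ _ => FreeGroup.lift_apply_of
  have hexp : ∀ (i x : Fin n), toAdd (expHom i (FreeGroup.of x)) = if x = i then 1 else 0 := by
    intro i x
    rw [expHom, hof]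
    split <;> simp
  refine FreeGroup.induction_on w ?_ ?_ ?_ ?_
  · simp
  · intro x
    rw [hof]
    rw [Finset.sum_congr rfl (fun i _ => by rw [hexp, mul_ite, mul_one, mul_zero])]
    rw [Finset.sum_ite_eq]
    simp
  · intro x hx
    rw [map_inv, toAdd_inv, hx]
    rw [← Finset.sum_neg_distrib]
    refine Finset.sum_congr rfl fun i _ => ?_
    rw [map_inv, toAdd_inv, mul_neg]
  · intro v u hv hu
    rw [map_mul, toAdd_mul, hv, hu, ← Finset.sum_add_distrib]
    refine Finset.sum_congr rfl fun i _ => ?_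
    rw [map_mul, toAdd_mul, mul_add]

end ExpSum

section Affine
variable {n : ℕ} [NeZero n]

omit [NeZero n] in
lemma lift_comp_hom {G H : Type*} [Group G] [Group H] (π : G →* H) (u : Fin n → G)
    (w : FreeGroup (Fin n)) : π (FreeGroup.lift u w) = FreeGroup.lift (π ∘ u) w := by
  have : π.comp (FreeGroup.lift u) = FreeGroup.lift (π ∘ u) := by
    refine FreeGroup.ext_hom _ _ fun a => ?_
    simp [FreeGroup.lift_apply_of]
  exact DFunLike.congr_fun this w

lemma affine (f : Fin n → WreathZZ) (w : FreeGroup (Fin n)) :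
    ∃ (q : RZ) (h : WreathZZ), ∀ a : RZ,
      FreeGroup.lift (Function.update f 0 (inlZ a)) w = inlZ (q * a) * h := by
  have hpure : ∀ x : Fin n, (pure x : FreeGroup (Fin n)) = FreeGroup.of x := fun _ => rfl
  refine FreeGroup.induction_on w ?_ ?_ ?_ ?_
  · exact ⟨0, 1, fun a => by rw [map_one, zero_mul, inlZ_zero, one_mul]⟩
  · intro x
    by_cases hx : x = 0
    · subst hx
      refine ⟨1, 1, fun a => ?_⟩
      rw [FreeGroup.lift_apply_of, Function.update_self, one_mul, mul_one]
    · refine ⟨0, f x, fun a => ?_⟩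
      rw [FreeGroup.lift_apply_of, Function.update_of_ne hx, zero_mul, inlZ_zero, one_mul]
  · intro x _
    by_cases hx : x = 0
    · subst hx
      refine ⟨-1, 1, fun a => ?_⟩
      rw [map_inv, FreeGroup.lift_apply_of, Function.update_self, mul_one, inlZ_inv, neg_mul, one_mul]
    · refine ⟨0, (f x)⁻¹, fun a => ?_⟩
      rw [map_inv, FreeGroup.lift_apply_of, Function.update_of_ne hx, zero_mul, inlZ_zero, one_mul]
  · rintro v u ⟨q₁, h₁, H₁⟩ ⟨q₂, h₂, H₂⟩
    refine ⟨q₁ + AddMonoidAlgebra.single (toAdd (rightHom h₁)) 1 * q₂, h₁ * h₂, fun a => ?_⟩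
    rw [map_mul, H₁, H₂]
    have hc := conj_inlZ h₁ (q₂ * a)
    have e1 : inlZ (q₁ * a) * h₁ * (inlZ (q₂ * a) * h₂)
        = inlZ (q₁ * a) * (h₁ * inlZ (q₂ * a) * h₁⁻¹) * (h₁ * h₂) := by group
    rw [e1, hc, inlZ_mul]
    congr 2
    ring

end Affine
/-- The augmentation (coefficient-sum) ring homomorphism on `ℤ[t,t⁻¹]`. -/
def epsZ : RZ →ₐ[ℤ] ℤ := (AddMonoidAlgebra.lift ℤ ℤ ℤ) 1

lemma epsZ_single (k : ℤ) : epsZ (AddMonoidAlgebra.single k 1) = 1 := by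
  rw [epsZ, AddMonoidAlgebra.lift_single]
  simp

/-- Coefficient sum on the base group, as a monoid hom. -/
def sumHomBase : Multiplicative (ℤ →₀ ℤ) →* Multiplicative ℤ where
  toFun c := ofAdd (epsZ (AddMonoidAlgebra.ofCoeff (toAdd c)))
  map_one' := congrArg ofAdd (map_zero epsZ)
  map_mul' := fun x y => congrArg ofAdd (map_add epsZ (AddMonoidAlgebra.ofCoeff (toAdd x)) (AddMonoidAlgebra.ofCoeff (toAdd y)))

lemma sumHomBase_apply (a : RZ) : sumHomBase (ofAdd a.coeff) = ofAdd (epsZ a) := rfl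

/-- The "total coefficient sum" homomorphism on the wreath product. -/
def sumHom : WreathZZ →* Multiplicative ℤ :=
  SemidirectProduct.lift sumHomBase 1 (by
    intro g
    refine MonoidHom.ext fun c => ?_
    show sumHomBase ((wreathShift ℤ g) c) = (MulAut.conj ((1 : Multiplicative ℤ →*
      Multiplicative ℤ) g)) (sumHomBase c)
    have h1 := wreathShift_eq g (AddMonoidAlgebra.ofCoeff (toAdd c))
    rw [show ((wreathShift ℤ) g) c
        = ((wreathShift ℤ) g) (ofAdd (AddMonoidAlgebra.ofCoeff (toAdd c)).coeff) from rfl, h1]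
    show (ofAdd (epsZ (AddMonoidAlgebra.single (toAdd g) 1 * AddMonoidAlgebra.ofCoeff (toAdd c))) : Multiplicative ℤ)
      = (MulAut.conj ((1 : Multiplicative ℤ →* Multiplicative ℤ) g)) (sumHomBase c)
    rw [map_mul epsZ, epsZ_single, one_mul]
    have h2 : (MulAut.conj ((1 : Multiplicative ℤ →* Multiplicative ℤ) g)) (sumHomBase c)
        = sumHomBase c := by simp
    rw [h2]
    rfl)

lemma sumHom_inlZ (a : RZ) : sumHom (inlZ a) = ofAdd (epsZ a) := by
  rw [inlZ, sumHom, SemidirectProduct.lift_inl]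
  rfl

/-- The iterational depth of `ℤ ≀ ℤ` is at most `2`:
every E-type iterated identity of `ℤ ≀ ℤ` has iterational depth at most `2`. -/
theorem wreathZZ_depth_le_two :
    ∀ (n : ℕ) [NeZero n] (w : FreeGroup (Fin n)),
      IsEIteratedIdentity w WreathZZ → DepthAtMost w WreathZZ 2 := by
  intro n _ w HE
  set t : Fin n → ℤ := fun i => toAdd (expHom i w) with ht
  -- the right-hand (ℤ-)component of a verbal image
  have hrw : ∀ (f : Fin n → WreathZZ) (x : WreathZZ),
      toAdd (rightHom (verbalMap w f x))
        = ∑ i, toAdd (Function.update ((rightHom : WreathZZ →* Multiplicative ℤ) ∘ f) 0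
            (rightHom x) i) * t i := by
    intro f x
    show toAdd (rightHom (FreeGroup.lift (Function.update f 0 x) w)) = _
    rw [lift_comp_hom, Function.comp_update]
    exact lift_toAdd _ w
  -- the exponent sum of the distinguished variable is zero
  have ht0 : t 0 = 0 := by
    set f : Fin n → WreathZZ := fun j => if j = 0 then inr (ofAdd 1) else 1 with hf
    obtain ⟨d, hd1, hd⟩ := HE f
    have key : ∀ k : ℕ, toAdd (rightHom ((verbalMap w f)^[k] (f 0))) = (t 0) ^ k := by
      intro k
      induction k with
      | zero => simp [hf]
      | succ k ih =>
        rw [Function.iterate_succ_apply', hrw]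
        have hside : ∀ i ∈ Finset.univ, i ≠ (0 : Fin n) →
            toAdd (Function.update ((rightHom : WreathZZ →* Multiplicative ℤ) ∘ f) 0
              (rightHom ((verbalMap w f)^[k] (f 0))) i) * t i = 0 := by
          intro i _ hi
          rw [Function.update_of_ne hi]
          have : ((rightHom : WreathZZ →* Multiplicative ℤ) ∘ f) i = 1 := by
            simp [hf, hi]
          rw [this]
          simp
        rw [Finset.sum_eq_single 0 hside (by simp), Function.update_self, ih, pow_succ]
    have hkey := key d
    rw [hd] at hkey
    simp only [toAdd_one, map_one] at hkey
    exact pow_eq_zero_iff (by omega : d ≠ 0) |>.mp hkey.symm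
  -- all other exponent sums are zero as well
  have htall : ∀ i, t i = 0 := by
    intro i0
    by_cases hi0 : i0 = 0
    · rw [hi0]; exact ht0
    set f : Fin n → WreathZZ := fun j => if j = i0 then inr (ofAdd 1) else 1 with hf
    obtain ⟨d, hd1, hd⟩ := HE f
    obtain ⟨e, rfl⟩ : ∃ e, d = e + 1 := ⟨d - 1, by omega⟩
    have hstep : toAdd (rightHom ((verbalMap w f)^[e + 1] (f 0))) = t i0 := by
      rw [Function.iterate_succ_apply', hrw]
      have hside : ∀ i ∈ Finset.univ, i ≠ i0 →
          toAdd (Function.update ((rightHom : WreathZZ →* Multiplicative ℤ) ∘ f) 0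
            (rightHom ((verbalMap w f)^[e] (f 0))) i) * t i = 0 := by
        intro i _ hi
        by_cases hiz : i = 0
        · subst hiz
          rw [Function.update_self, ht0, mul_zero]
        · rw [Function.update_of_ne hiz]
          have : ((rightHom : WreathZZ →* Multiplicative ℤ) ∘ f) i = 1 := by
            simp [hf, hi]
          rw [this]
          simp
      rw [Finset.sum_eq_single i0 hside (by simp)]
      rw [Function.update_of_ne hi0]
      have : ((rightHom : WreathZZ →* Multiplicative ℤ) ∘ f) i0 = ofAdd 1 := by
        simp [hf]
      rw [this]
      simp
    rw [hd] at hstep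
    simpa using hstep.symm
    -- hence every evaluation of `w` in an abelian quotient vanishes
  have hw1 : ∀ g : Fin n → Multiplicative ℤ, FreeGroup.lift g w = 1 := by
    intro g
    refine toAdd.injective ?_
    rw [lift_toAdd]
    have htall' : ∀ i : Fin n, toAdd (expHom i w) = 0 := htall
    rw [Finset.sum_congr rfl fun i _ => by rw [htall' i, mul_zero]]
    simp
  have hrh1 : ∀ (f : Fin n → WreathZZ) (x : WreathZZ), rightHom (verbalMap w f x) = 1 := by
    intro f x
    show rightHom (FreeGroup.lift (Function.update f 0 x) w) = 1
    rw [lift_comp_hom]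
    exact hw1 _
  have hsum1 : ∀ (f : Fin n → WreathZZ) (x : WreathZZ), sumHom (verbalMap w f x) = 1 := by
    intro f x
    show sumHom (FreeGroup.lift (Function.update f 0 x) w) = 1
    rw [lift_comp_hom]
    exact hw1 _
  -- now fix the tuple f
  intro f
  obtain ⟨q, h, Hq⟩ := affine f w
  have H' : ∀ x : WreathZZ, ∃ d, 1 ≤ d ∧ (verbalMap w f)^[d] x = 1 := by
    intro x
    obtain ⟨d, hd1, hd⟩ := HE (Function.update f 0 x)
    have hvm : verbalMap w (Function.update f 0 x) = verbalMap w f := by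
      funext y
      show FreeGroup.lift (Function.update (Function.update f 0 x) 0 y) w = _
      rw [Function.update_idem]
      rfl
    rw [hvm, Function.update_self] at hd
    exact ⟨d, hd1, hd⟩
  -- the constant term is in the base group
  have base_of_rh : ∀ x : WreathZZ, rightHom x = 1 → x = inlZ (AddMonoidAlgebra.ofCoeff (toAdd x.left)) := by
    intro x hx
    have h1 : x = inl x.left * inr x.right := (inl_left_mul_inr_right x).symm
    have h2 : x.right = 1 := hx
    rw [h2, map_one, mul_one] at h1
    exact h1.trans (congrArg inl (ofAdd_toAdd x.left).symm)
  have hφ1 : verbalMap w f (inlZ 0) = h := by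
    show FreeGroup.lift (Function.update f 0 (inlZ 0)) w = h
    rw [Hq 0, mul_zero, inlZ_zero, one_mul]
  have hhb : h = inlZ (AddMonoidAlgebra.ofCoeff (toAdd h.left)) := by
    refine base_of_rh h ?_
    rw [← hφ1]
    exact hrh1 f _
  set b : RZ := AddMonoidAlgebra.ofCoeff (toAdd h.left) with hbdef
  have hφ : ∀ a : RZ, verbalMap w f (inlZ a) = inlZ (q * a + b) := by
    intro a
    show FreeGroup.lift (Function.update f 0 (inlZ a)) w = _
    rw [Hq a, hhb, inlZ_mul]
  -- augmentation of q and b vanish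
  have hsig : ∀ a : RZ, epsZ (q * a + b) = 0 := by
    intro a
    have h1 := hsum1 f (inlZ a)
    rw [hφ a, sumHom_inlZ] at h1
    refine ofAdd.injective ?_
    rw [ofAdd_zero]
    exact h1
  have hεb : epsZ b = 0 := by
    have := hsig 0
    rwa [mul_zero, zero_add] at this
  have hεq : epsZ q = 0 := by
    have := hsig 1
    rwa [mul_one, map_add, hεb, add_zero] at this
  -- iteration on the base
  set ψ : RZ → RZ := fun a => q * a + b with hψ
  have hit : ∀ (k : ℕ) (a : RZ), (verbalMap w f)^[k] (inlZ a) = inlZ (ψ^[k] a) := by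
    intro k
    induction k with
    | zero => intro a; simp
    | succ k ih =>
      intro a
      rw [Function.iterate_succ_apply', Function.iterate_succ_apply', ih, hφ]
  have hitf : ∀ (k : ℕ) (a : RZ), ψ^[k] a = q ^ k * a + (∑ j ∈ Finset.range k, q ^ j) * b := by
    intro k
    induction k with
    | zero => intro a; simp
    | succ k ih =>
      intro a
      rw [Function.iterate_succ_apply', ih, geom_sum_succ]
      show q * (q ^ k * a + (∑ j ∈ Finset.range k, q ^ j) * b) + b = _
      ring
  have hinlZ_eq_one : ∀ a : RZ, inlZ a = 1 → a = 0 := by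
    intro a ha
    refine inlZ_injective ?_
    rw [ha, inlZ_zero]
  -- b = 0
  have hb0 : b = 0 := by
    obtain ⟨d, hd1, hd⟩ := H' (inlZ 0)
    rw [hit d 0] at hd
    have h0 := hinlZ_eq_one _ hd
    rw [hitf, mul_zero, zero_add] at h0
    rcases mul_eq_zero.mp h0 with hσ | hb
    · exfalso
      have hε1 : epsZ (∑ j ∈ Finset.range d, q ^ j) = 1 := by
        rw [map_sum]
        rw [Finset.sum_congr rfl fun j _ => by rw [map_pow, hεq]]
        obtain ⟨e, rfl⟩ : ∃ e, d = e + 1 := ⟨d - 1, by omega⟩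
        rw [Finset.sum_range_succ']
        simp
      rw [hσ, map_zero] at hε1
      exact one_ne_zero hε1.symm
    · exact hb
  -- conclude
  have hy : verbalMap w f (f 0) = inlZ (AddMonoidAlgebra.ofCoeff (toAdd (verbalMap w f (f 0)).left)) :=
    base_of_rh _ (hrh1 f (f 0))
  set a₀ : RZ := AddMonoidAlgebra.ofCoeff (toAdd (verbalMap w f (f 0)).left) with ha₀
  obtain ⟨d, hd1, hd⟩ := H' (inlZ a₀)
  rw [hit d a₀] at hd
  have h0 := hinlZ_eq_one _ hd
  rw [hitf, hb0, mul_zero, add_zero] at h0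
  rcases mul_eq_zero.mp h0 with hq | ha
  · -- q ^ d = 0, hence q = 0, depth 2
    have hq0 : q = 0 := pow_eq_zero_iff (by omega : d ≠ 0) |>.mp hq
    refine ⟨2, by omega, by omega, ?_⟩
    show verbalMap w f (verbalMap w f (f 0)) = 1
    rw [hy, hφ, hq0, hb0, zero_mul, zero_add, inlZ_zero]
  · -- a₀ = 0, depth 1
    refine ⟨1, by omega, by omega, ?_⟩
    show verbalMap w f (f 0) = 1
    rw [hy, ha]
    exact inlZ_zero
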